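/- arXiv:1708.01340 — 4 statements merged into one kernel-verified Lean document; each statement's English description precedes it below -/
import Mathlib

section
/- Let X be a real Banach space, I = [a₀, b₀] a compact interval, and f : ℝ × X → ℝ a C¹ function. Let a < b be real values that are regular values of f_λ for every λ ∈ I, and suppose f satisfies the Palais–Smale conditions (PS)_{I,a} and (PS)_{I,b}, and that ∂f/∂λ is bounded on the set {(λ, x) ∈ I × X : f(λ, x) ∈ U_δ} for some δ > 0, where U_δ = (a−δ, a+δ) ∪ (b−δ, b+δ). Then there exists a bounded, locally Lipschitz vector field v : ℝ × X → X such that ∂f/∂λ(λ, x) + f'_λ(x)[v(λ, x)] < 0 whenever λ ∈ I and f_λ(x) ∈ {a, b}. -/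
open Filter Topology Set Metric

lemma myLipschitzOnWith.congr {Y E : Type*} [PseudoEMetricSpace Y] [PseudoEMetricSpace E]
    {K : NNReal} {f g : Y → E} {t : Set Y} (h : LipschitzOnWith K f t)
    (he : ∀ z ∈ t, g z = f z) : LipschitzOnWith K g t := by
  intro x hx y hy
  rw [he x hx, he y hy]
  exact h hx hy

lemma myLipschitzOnWith.sum {ι Y E : Type*} [PseudoMetricSpace Y] [SeminormedAddCommGroup E]
    (s : Finset ι) {f : ι → Y → E} {K : ι → NNReal} {t : Set Y}
    (h : ∀ i ∈ s, LipschitzOnWith (K i) (f i) t) :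
    LipschitzOnWith (∑ i ∈ s, K i) (fun y => ∑ i ∈ s, f i y) t := by
  apply LipschitzOnWith.of_dist_le_mul
  intro x hx y hy
  calc dist (∑ i ∈ s, f i x) (∑ i ∈ s, f i y) ≤ ∑ i ∈ s, dist (f i x) (f i y) :=
        dist_sum_sum_le s _ _
    _ ≤ ∑ i ∈ s, (K i : ℝ) * dist x y := by
        apply Finset.sum_le_sum
        intro i hi
        exact (h i hi).dist_le_mul x hx y hy
    _ = (↑(∑ i ∈ s, K i) : ℝ) * dist x y := by
        rw [← Finset.sum_mul]; push_cast; ring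

lemma myLocallyLipschitz.add {Y : Type*} [PseudoMetricSpace Y]
    {f g : Y → ℝ} (hf : LocallyLipschitz f) (hg : LocallyLipschitz g) :
    LocallyLipschitz (fun y => f y + g y) := by
  intro x
  obtain ⟨K₁, t₁, ht₁, h₁⟩ := hf x
  obtain ⟨K₂, t₂, ht₂, h₂⟩ := hg x
  refine ⟨K₁ + K₂, t₁ ∩ t₂, inter_mem ht₁ ht₂, ?_⟩
  apply LipschitzOnWith.of_dist_le_mul
  intro z hz w hw
  calc dist (f z + g z) (f w + g w) ≤ dist (f z) (f w) + dist (g z) (g w) :=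
        dist_add_add_le _ _ _ _
    _ ≤ K₁ * dist z w + K₂ * dist z w :=
        add_le_add ((h₁.mono inter_subset_left).dist_le_mul z hz w hw)
          ((h₂.mono inter_subset_right).dist_le_mul z hz w hw)
    _ = (↑(K₁ + K₂) : ℝ) * dist z w := by push_cast; ring

lemma myLocallyLipschitz.inv_smul {Y X : Type*} [MetricSpace Y] [NormedAddCommGroup X]
    [NormedSpace ℝ X] {D : Y → ℝ} {N : Y → X} (hD : LocallyLipschitz D)
    (hN : LocallyLipschitz N) (hpos : ∀ y, 0 < D y) :
    LocallyLipschitz (fun y => (D y)⁻¹ • N y) := by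
  intro y₀
  obtain ⟨K₁, t₁, ht₁, h₁⟩ := hD y₀
  obtain ⟨K₂, t₂, ht₂, h₂⟩ := hN y₀
  set c : ℝ := D y₀ / 2 with hc
  have hc0 : 0 < c := half_pos (hpos y₀)
  -- choose a ball inside t₁ ∩ t₂ on which D ≥ c and ‖N‖ ≤ B
  obtain ⟨r₁, hr₁, hball⟩ := Metric.mem_nhds_iff.1 (inter_mem ht₁ ht₂)
  set B : ℝ := ‖N y₀‖ + 1 with hB
  set r : ℝ := min r₁ (min (c / (K₁ + 1)) (1 / (K₂ + 1))) with hr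
  have hrpos : 0 < r :=
    lt_min hr₁ (lt_min (div_pos hc0 (by positivity)) (by positivity))
  set s : Set Y := Metric.ball y₀ r with hs
  have hsub : s ⊆ t₁ ∩ t₂ := fun z hz => hball (Metric.ball_subset_ball (min_le_left _ _) hz)
  have hDlow : ∀ z ∈ s, c ≤ D z := by
    intro z hz
    have hd : dist (D z) (D y₀) ≤ K₁ * dist z y₀ :=
      (h₁.mono (hsub.trans inter_subset_left)).dist_le_mul z hz y₀
        (Metric.mem_ball_self hrpos)
    have hdist : dist z y₀ < r := hz
    have hK : (K₁ : ℝ) * dist z y₀ ≤ K₁ * r :=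
      mul_le_mul_of_nonneg_left hdist.le K₁.coe_nonneg
    have hrc : (K₁ : ℝ) * r ≤ c := by
      have h1 : r ≤ c / (K₁ + 1) := le_trans (min_le_right _ _) (min_le_left _ _)
      have h2 : (K₁ : ℝ) * r ≤ (K₁ + 1) * (c / (K₁ + 1)) := by
        apply mul_le_mul _ h1 (le_of_lt hrpos) (by positivity)
        · linarith [K₁.coe_nonneg]
      calc (K₁ : ℝ) * r ≤ (K₁ + 1) * (c / (K₁ + 1)) := h2
        _ = c := by field_simp
    have : |D z - D y₀| ≤ c := by
      rw [← Real.dist_eq]; exact hd.trans (hK.trans hrc)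
    have h3 := abs_le.1 this
    have : D y₀ = 2 * c := by rw [hc]; ring
    linarith [h3.1]
  have hNbd : ∀ z ∈ s, ‖N z‖ ≤ B := by
    intro z hz
    have hd : dist (N z) (N y₀) ≤ K₂ * dist z y₀ :=
      (h₂.mono (hsub.trans inter_subset_right)).dist_le_mul z hz y₀
        (Metric.mem_ball_self hrpos)
    have hdist : dist z y₀ < r := hz
    have hrc : (K₂ : ℝ) * r ≤ 1 := by
      have h1 : r ≤ 1 / (K₂ + 1) := le_trans (min_le_right _ _) (min_le_right _ _)
      have h2 : (K₂ : ℝ) * r ≤ (K₂ + 1) * (1 / (K₂ + 1)) := by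
        apply mul_le_mul _ h1 (le_of_lt hrpos) (by positivity)
        · linarith [K₂.coe_nonneg]
      calc (K₂ : ℝ) * r ≤ (K₂ + 1) * (1 / (K₂ + 1)) := h2
        _ = 1 := by field_simp
    have : ‖N z - N y₀‖ ≤ 1 := by
      rw [← dist_eq_norm]
      exact hd.trans ((mul_le_mul_of_nonneg_left hdist.le K₂.coe_nonneg).trans hrc)
    have habs := abs_le.1 (abs_norm_sub_norm_le (N z) (N y₀))
    have := habs.1
    simp only [hB]
    linarith
  set C : ℝ := K₂ / c + K₁ * B / (c * c) with hC
  have hC0 : 0 ≤ C := by positivity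
  refine ⟨C.toNNReal, s, Metric.ball_mem_nhds y₀ hrpos, ?_⟩
  apply LipschitzOnWith.of_dist_le_mul
  intro z hz w hw
  have hDz := hDlow z hz
  have hDw := hDlow w hw
  have hNw := hNbd w hw
  have hDzpos := hpos z
  have hDwpos := hpos w
  have key : (D z)⁻¹ • N z - (D w)⁻¹ • N w
      = (D z)⁻¹ • (N z - N w) + ((D z)⁻¹ - (D w)⁻¹) • N w := by
    rw [smul_sub, sub_smul]; abel
  rw [dist_eq_norm, key]
  have h1 : ‖(D z)⁻¹ • (N z - N w)‖ ≤ c⁻¹ * (K₂ * dist z w) := by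
    rw [norm_smul, Real.norm_eq_abs, abs_of_pos (by positivity)]
    apply mul_le_mul
    · exact inv_anti₀ hc0 hDz
    · rw [← dist_eq_norm]
      exact (h₂.mono (hsub.trans inter_subset_right)).dist_le_mul z hz w hw
    · positivity
    · positivity
  have h2 : ‖((D z)⁻¹ - (D w)⁻¹) • N w‖ ≤ (K₁ * dist z w) / (c * c) * B := by
    rw [norm_smul, Real.norm_eq_abs]
    have heq : (D z)⁻¹ - (D w)⁻¹ = (D w - D z) / (D z * D w) := by
      field_simp
    rw [heq, abs_div]
    have hnum : |D w - D z| ≤ K₁ * dist z w := by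
      rw [abs_sub_comm, ← Real.dist_eq]
      exact (h₁.mono (hsub.trans inter_subset_left)).dist_le_mul z hz w hw
    have hden : c * c ≤ |D z * D w| := by
      rw [abs_of_pos (by positivity)]
      exact mul_le_mul hDz hDw hc0.le (by positivity)
    apply mul_le_mul _ hNw (norm_nonneg _) (by positivity)
    exact div_le_div₀ (by positivity) hnum (by positivity) hden
  have hfin : c⁻¹ * (↑K₂ * dist z w) + (↑K₁ * dist z w) / (c * c) * B = C * dist z w := by
    rw [hC]; field_simp
  calc ‖(D z)⁻¹ • (N z - N w) + ((D z)⁻¹ - (D w)⁻¹) • N w‖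
      ≤ ‖(D z)⁻¹ • (N z - N w)‖ + ‖((D z)⁻¹ - (D w)⁻¹) • N w‖ := norm_add_le _ _
    _ ≤ c⁻¹ * (↑K₂ * dist z w) + (↑K₁ * dist z w) / (c * c) * B := add_le_add h1 h2
    _ = C * dist z w := hfin
    _ = ↑C.toNNReal * dist z w := by rw [Real.coe_toNNReal _ hC0]

lemma myLipschitzWith.smul_const {Y X : Type*} [PseudoMetricSpace Y] [NormedAddCommGroup X]
    [NormedSpace ℝ X] {f : Y → ℝ} {K : NNReal} (hf : LipschitzWith K f) (c : X) :
    LipschitzWith (K * ‖c‖₊) (fun y => f y • c) := by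
  apply LipschitzWith.of_dist_le_mul
  intro z w
  calc dist (f z • c) (f w • c) = ‖(f z - f w) • c‖ := by rw [dist_eq_norm, ← sub_smul]
    _ = |f z - f w| * ‖c‖ := by rw [norm_smul, Real.norm_eq_abs]
    _ ≤ (K * dist z w) * ‖c‖ := by
        apply mul_le_mul_of_nonneg_right _ (norm_nonneg c)
        rw [← Real.dist_eq]; exact hf.dist_le_mul z w
    _ = ↑(K * ‖c‖₊) * dist z w := by push_cast; ring

theorem stmt5
    {X : Type*} [NormedAddCommGroup X] [NormedSpace ℝ X] [CompleteSpace X]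
    (a₀ b₀ : ℝ) (f : ℝ × X → ℝ) (hf : ContDiff ℝ 1 f)
    (a b : ℝ) (hab : a < b)
    (hreg : ∀ l ∈ Icc a₀ b₀, ∀ x : X, (f (l, x) = a ∨ f (l, x) = b) →
      fderiv ℝ (fun y => f (l, y)) x ≠ 0)
    (hPS : ∀ c ∈ ({a, b} : Set ℝ), ∀ (l : ℕ → ℝ) (x : ℕ → X),
      (∀ n, l n ∈ Icc a₀ b₀) →
      Tendsto (fun n => f (l n, x n)) atTop (𝓝 c) →
      Tendsto (fun n => fderiv ℝ (fun y => f (l n, y)) (x n)) atTop (𝓝 0) →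
      ∃ φ : ℕ → ℕ, StrictMono φ ∧ ∃ x₀ : X,
        Tendsto (fun k => x (φ k)) atTop (𝓝 x₀))
    (δ : ℝ) (hδ : 0 < δ)
    (hbound : ∃ M : ℝ, ∀ l ∈ Icc a₀ b₀, ∀ x : X,
      f (l, x) ∈ Ioo (a - δ) (a + δ) ∪ Ioo (b - δ) (b + δ) →
      |deriv (fun s => f (s, x)) l| ≤ M) :
    ∃ v : ℝ × X → X,
      (∃ M : ℝ, ∀ p : ℝ × X, ‖v p‖ ≤ M) ∧
      LocallyLipschitz v ∧
      ∀ l ∈ Icc a₀ b₀, ∀ x : X, (f (l, x) = a ∨ f (l, x) = b) →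
        deriv (fun s => f (s, x)) l
          + fderiv ℝ (fun y => f (l, y)) x (v (l, x)) < 0 := by
  classical
  obtain ⟨M, hM⟩ := hbound
  set M' : ℝ := |M| + 1 with hM'def
  have hM'pos : 0 < M' := by positivity
  have hMM' : M ≤ M' - 1 := by
    have := le_abs_self M; simp only [hM'def]; linarith
  -- the partial (in x) derivative as a continuous map
  set g : ℝ × X → (X →L[ℝ] ℝ) :=
    fun y => (fderiv ℝ f y).comp (ContinuousLinearMap.inr ℝ ℝ X) with hgdef
  have hgc : Continuous g := (hf.continuous_fderiv one_ne_zero).clm_comp_const _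
  have hgeq : ∀ l : ℝ, ∀ x : X, fderiv ℝ (fun y => f (l, y)) x = g (l, x) := by
    intro l x
    have h1 : HasFDerivAt (fun y : X => (l, y)) (ContinuousLinearMap.inr ℝ ℝ X) x :=
      HasFDerivAt.prodMk (hasFDerivAt_const l x) (hasFDerivAt_id x)
    exact (((hf.differentiable one_ne_zero) (l, x)).hasFDerivAt.comp x h1).fderiv
  set KS : Set (ℝ × X) := {y | y.1 ∈ Icc a₀ b₀ ∧ (f y = a ∨ f y = b)} with hKSdef
  have hKSc : IsClosed KS := by
    have h1 : KS = (Prod.fst ⁻¹' Icc a₀ b₀) ∩ (f ⁻¹' ({a} ∪ {b})) := by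
      ext y
      simp only [hKSdef, mem_setOf_eq, mem_inter_iff, mem_preimage, mem_union,
        mem_singleton_iff, mem_Icc]
    rw [h1]
    exact (isClosed_Icc.preimage continuous_fst).inter
      (((isClosed_singleton.union isClosed_singleton)).preimage hf.continuous)
  by_cases hKne : KS.Nonempty
  swap
  · refine ⟨fun _ => 0, ⟨0, fun p => by simp⟩, LocallyLipschitz.const 0, ?_⟩
    intro l hl x hfx
    exact absurd ⟨⟨l, x⟩, hl, hfx⟩ hKne
  -- uniform lower bound on the norm of the derivative on KS
  have hε : ∃ ε > 0, ∀ y ∈ KS, ε ≤ ‖g y‖ := by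
    by_contra h
    push_neg at h
    choose y hyK hyn using fun n : ℕ => h (1 / (n + 1)) (by positivity)
    have hgy0 : Tendsto (fun n => g (y n)) atTop (𝓝 0) := by
      apply squeeze_zero_norm (fun n => (hyn n).le)
      exact tendsto_one_div_add_atTop_nhds_zero_nat
    have hor : (∃ᶠ n in atTop, f (y n) = a) ∨ (∃ᶠ n in atTop, f (y n) = b) := by
      apply Filter.frequently_or_distrib.1
      exact Filter.Eventually.frequently (Filter.Eventually.of_forall fun n => (hyK n).2)
    have hc : ∃ c ∈ ({a, b} : Set ℝ), ∃ᶠ n in atTop, f (y n) = c := by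
      rcases hor with h | h
      · exact ⟨a, by simp, h⟩
      · exact ⟨b, by simp, h⟩
    obtain ⟨c, hcmem, hcfreq⟩ := hc
    obtain ⟨φ, hφmono, hφ⟩ := Filter.extraction_of_frequently_atTop hcfreq
    obtain ⟨ψ, hψmono, x₀, hx₀⟩ := hPS c hcmem (fun n => (y (φ n)).1) (fun n => (y (φ n)).2)
      (fun n => (hyK (φ n)).1)
      (by
        have heq : (fun n => f ((y (φ n)).1, (y (φ n)).2)) = fun _ => c :=
          funext fun n => by rw [Prod.mk.eta]; exact hφ n
        rw [heq]; exact tendsto_const_nhds)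
      (by
        have heq : (fun n => fderiv ℝ (fun x => f ((y (φ n)).1, x)) ((y (φ n)).2))
            = fun n => g (y (φ n)) :=
          funext fun n => by rw [hgeq, Prod.mk.eta]
        rw [heq]
        exact hgy0.comp hφmono.tendsto_atTop)
    obtain ⟨lam0, hlam0, χ, hχmono, hχ⟩ := isCompact_Icc.tendsto_subseq
      (x := fun k => (y (φ (ψ k))).1) (fun k => (hyK _).1)
    set σ : ℕ → ℕ := fun k => φ (ψ (χ k)) with hσdef
    have hσmono : StrictMono σ := hφmono.comp (hψmono.comp hχmono)
    have hyconv : Tendsto (fun k => y (σ k)) atTop (𝓝 (lam0, x₀)) := by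
      have h1 : Tendsto (fun k => (y (σ k)).1) atTop (𝓝 lam0) := hχ
      have h2 : Tendsto (fun k => (y (σ k)).2) atTop (𝓝 x₀) :=
        hx₀.comp hχmono.tendsto_atTop
      have := h1.prodMk_nhds h2
      simpa only [Prod.mk.eta] using this
    have hg0 : g (lam0, x₀) = 0 := by
      have h1 : Tendsto (fun k => g (y (σ k))) atTop (𝓝 (g (lam0, x₀))) :=
        (hgc.tendsto _).comp hyconv
      have h2 : Tendsto (fun k => g (y (σ k))) atTop (𝓝 0) :=
        hgy0.comp hσmono.tendsto_atTop
      exact tendsto_nhds_unique h1 h2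
    have hfc : f (lam0, x₀) = c := by
      have h1 : Tendsto (fun k => f (y (σ k))) atTop (𝓝 (f (lam0, x₀))) :=
        (hf.continuous.tendsto _).comp hyconv
      have h2 : (fun k => f (y (σ k))) = fun _ => c := funext fun k => hφ (ψ (χ k))
      rw [h2] at h1
      exact tendsto_nhds_unique h1 tendsto_const_nhds
    have hfab : f (lam0, x₀) = a ∨ f (lam0, x₀) = b := by
      rcases hcmem with h | h
      · left; rw [hfc]; exact h
      · right; rw [hfc]; simpa using h
    have := hreg lam0 hlam0 x₀ hfab
    rw [hgeq] at this
    exact this hg0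
  obtain ⟨ε, hε0, hεK⟩ := hε
  -- choose the directions w i
  have hwex : ∀ i : KS, ∃ w : X, ‖w‖ ≤ 4 * M' / ε ∧ g ↑i (w) < -(2 * M') := by
    intro i
    have h1 : ε / 2 < ‖g ↑i‖ := lt_of_lt_of_le (half_lt_self hε0) (hεK _ i.2)
    obtain ⟨u, hu1, hu2⟩ := (g ↑i).exists_lt_apply_of_lt_opNorm h1
    have habs : ε / 2 < |g ↑i u| := hu2
    have hcoef : 0 < 4 * M' / ε := by positivity
    rcases le_or_gt (g ↑i u) 0 with hneg | hpos
    · refine ⟨(4 * M' / ε) • u, ?_, ?_⟩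
      · rw [norm_smul, Real.norm_eq_abs, abs_of_pos hcoef]
        calc (4 * M' / ε) * ‖u‖ ≤ (4 * M' / ε) * 1 :=
              mul_le_mul_of_nonneg_left hu1.le hcoef.le
          _ = 4 * M' / ε := mul_one _
      · have hgu : g ↑i u < -(ε / 2) := by
          rw [abs_of_nonpos hneg] at habs; linarith
        rw [map_smul, smul_eq_mul]
        calc (4 * M' / ε) * g ↑i u < (4 * M' / ε) * (-(ε / 2)) :=
              (mul_lt_mul_iff_right₀ hcoef).2 hgu
          _ = -(2 * M') := by field_simp; ring
    · refine ⟨-((4 * M' / ε) • u), ?_, ?_⟩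
      · rw [norm_neg, norm_smul, Real.norm_eq_abs, abs_of_pos hcoef]
        calc (4 * M' / ε) * ‖u‖ ≤ (4 * M' / ε) * 1 :=
              mul_le_mul_of_nonneg_left hu1.le hcoef.le
          _ = 4 * M' / ε := mul_one _
      · have hgu : ε / 2 < g ↑i u := by
          rw [abs_of_pos hpos] at habs; exact habs
        rw [map_neg, map_smul, smul_eq_mul]
        have : (4 * M' / ε) * (ε / 2) < (4 * M' / ε) * g ↑i u :=
          (mul_lt_mul_iff_right₀ hcoef).2 hgu
        have heq : (4 * M' / ε) * (ε / 2) = 2 * M' := by field_simp; ring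
        linarith
  choose w hwn hwg using hwex
  -- the open cover
  set U : KS → Set (ℝ × X) := fun i => {y | g y (w i) < -M'} ∩ Metric.ball ↑i 1 with hUdef
  have hUo : ∀ i, IsOpen (U i) := by
    intro i
    exact (isOpen_lt (hgc.clm_apply continuous_const) continuous_const).inter
      Metric.isOpen_ball
  have hmemU : ∀ i : KS, (i : ℝ × X) ∈ U i := by
    intro i
    constructor
    · show g ↑i (w i) < -M'
      have := hwg i; linarith
    · exact Metric.mem_ball_self one_pos
  have hcov : KS ⊆ ⋃ i, U i := fun p hp => mem_iUnion.2 ⟨⟨p, hp⟩, hmemU _⟩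
  obtain ⟨V, hVo, hKV, hVf, hVU⟩ := precise_refinement_set hKSc U hUo hcov
  -- the bump functions
  set ψf : KS → ℝ × X → ℝ := fun i y => infDist y (V i)ᶜ with hψdef
  have hψlip : ∀ i, LipschitzWith 1 (ψf i) := fun i => lipschitz_infDist_pt _
  have hψnonneg : ∀ i y, 0 ≤ ψf i y := fun i y => infDist_nonneg
  have hψ0 : ∀ i y, y ∉ V i → ψf i y = 0 := fun i y hy => infDist_zero_of_mem hy
  have hVcne : ∀ i : KS, ((V i)ᶜ : Set (ℝ × X)).Nonempty := by
    intro i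
    refine ⟨((i : ℝ × X).1 + 2, (i : ℝ × X).2), ?_⟩
    intro hmem
    have h1 : ((i : ℝ × X).1 + 2, (i : ℝ × X).2) ∈ Metric.ball (i : ℝ × X) 1 :=
      ((hVU i) hmem).2
    rw [Metric.mem_ball, Prod.dist_eq] at h1
    have h1' : max (dist ((i : ℝ × X).1 + 2) ((i : ℝ × X).1))
        (dist ((i : ℝ × X).2) ((i : ℝ × X).2)) < 1 := h1
    have h2 : dist ((i : ℝ × X).1 + 2) (i : ℝ × X).1 = 2 := by
      rw [Real.dist_eq]; simp
    rw [h2, dist_self] at h1'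
    have h3 : (2:ℝ) ≤ max 2 0 := le_max_left _ _
    linarith [lt_of_le_of_lt h3 h1']
  have hψpos : ∀ i y, y ∈ V i → 0 < ψf i y := by
    intro i y hy
    have := ((hVo i).isClosed_compl.notMem_iff_infDist_pos (hVcne i)).1 (by simpa using hy)
    exact this
  -- local finiteness data
  have hloc : ∀ y₀ : ℝ × X, ∃ t ∈ 𝓝 y₀, ∃ s : Finset KS,
      ∀ z ∈ t, ∀ i : KS, i ∉ s → ψf i z = 0 := by
    intro y₀
    obtain ⟨t, ht, hfin⟩ := hVf y₀
    refine ⟨t, ht, hfin.toFinset, ?_⟩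
    intro z hz i his
    apply hψ0
    intro hzV
    exact his (hfin.mem_toFinset.2 ⟨z, hzV, hz⟩)
  set Nf : ℝ × X → X := fun y => ∑' i, ψf i y • w i with hNfdef
  set Sf : ℝ × X → ℝ := fun y => ∑' i, ψf i y with hSfdef
  set Df : ℝ × X → ℝ := fun y => infDist y KS + Sf y with hDfdef
  have hrep : ∀ y₀ : ℝ × X, ∃ t ∈ 𝓝 y₀, ∃ s : Finset KS,
      (∀ z ∈ t, Sf z = ∑ i ∈ s, ψf i z) ∧
      (∀ z ∈ t, Nf z = ∑ i ∈ s, ψf i z • w i) ∧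
      (∀ z ∈ t, ∀ i : KS, i ∉ s → ψf i z = 0) := by
    intro y₀
    obtain ⟨t, ht, s, hs⟩ := hloc y₀
    refine ⟨t, ht, s, fun z hz => tsum_eq_sum (fun i hi => hs z hz i hi),
      fun z hz => tsum_eq_sum (fun i hi => by rw [hs z hz i hi, zero_smul]), hs⟩
  -- basic facts about Sf
  have hSnonneg : ∀ y, 0 ≤ Sf y := by
    intro y
    obtain ⟨t, ht, s, hS, _, _⟩ := hrep y
    rw [hS y (mem_of_mem_nhds ht)]
    exact Finset.sum_nonneg fun i _ => hψnonneg i y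
  have hψleS : ∀ (i : KS) (y : ℝ × X), ψf i y ≤ Sf y := by
    intro i y
    obtain ⟨t, ht, s, hS, _, hz⟩ := hrep y
    rcases eq_or_ne (ψf i y) 0 with h0 | h0
    · rw [h0]; exact hSnonneg y
    · have his : i ∈ s := by
        by_contra hc
        exact h0 (hz y (mem_of_mem_nhds ht) i hc)
      rw [hS y (mem_of_mem_nhds ht)]
      exact Finset.single_le_sum (fun j _ => hψnonneg j y) his
  have hSpos : ∀ y ∈ KS, 0 < Sf y := by
    intro y hy
    obtain ⟨i, hiV⟩ := mem_iUnion.1 (hKV hy)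
    exact lt_of_lt_of_le (hψpos i y hiV) (hψleS i y)
  have hDpos : ∀ y, 0 < Df y := by
    intro y
    by_cases hy : y ∈ KS
    · have := hSpos y hy
      have h2 : (0:ℝ) ≤ infDist y KS := infDist_nonneg
      simp only [hDfdef]; linarith
    · have h1 : 0 < infDist y KS := (hKSc.notMem_iff_infDist_pos hKne).1 hy
      have h2 := hSnonneg y
      simp only [hDfdef]; linarith
  -- local Lipschitzness
  have hSlip : LocallyLipschitz Sf := by
    intro y₀
    obtain ⟨t, ht, s, hS, _, _⟩ := hrep y₀
    refine ⟨∑ i ∈ s, 1, t, ht, ?_⟩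
    exact myLipschitzOnWith.congr
      (myLipschitzOnWith.sum (f := fun i => ψf i) (K := fun _ => 1) s
        (fun i _ => by exact (hψlip i).lipschitzOnWith (s := t))) hS
  have hNlip : LocallyLipschitz Nf := by
    intro y₀
    obtain ⟨t, ht, s, _, hN, _⟩ := hrep y₀
    refine ⟨∑ i ∈ s, (1 * ‖w i‖₊), t, ht, ?_⟩
    exact myLipschitzOnWith.congr
      (myLipschitzOnWith.sum (f := fun i y => ψf i y • w i) (K := fun i => 1 * ‖w i‖₊) s
        (fun i _ => by exact (myLipschitzWith.smul_const (hψlip i) (w i)).lipschitzOnWith (s := t))) hN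
  have hDlip : LocallyLipschitz Df :=
    myLocallyLipschitz.add (lipschitz_infDist_pt KS).locallyLipschitz hSlip
  set v : ℝ × X → X := fun y => (Df y)⁻¹ • Nf y with hvdef
  have hvlip : LocallyLipschitz v := myLocallyLipschitz.inv_smul hDlip hNlip hDpos
  -- boundedness
  have hvbd : ∀ y, ‖v y‖ ≤ 4 * M' / ε := by
    intro y
    obtain ⟨t, ht, s, hS, hN, _⟩ := hrep y
    have hyt := mem_of_mem_nhds ht
    have hNbd : ‖Nf y‖ ≤ (4 * M' / ε) * Sf y := by
      rw [hN y hyt, hS y hyt]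
      calc ‖∑ i ∈ s, ψf i y • w i‖ ≤ ∑ i ∈ s, ‖ψf i y • w i‖ := norm_sum_le _ _
        _ ≤ ∑ i ∈ s, ψf i y * (4 * M' / ε) := by
            apply Finset.sum_le_sum
            intro i _
            rw [norm_smul, Real.norm_eq_abs, abs_of_nonneg (hψnonneg i y)]
            exact mul_le_mul_of_nonneg_left (hwn i) (hψnonneg i y)
        _ = (4 * M' / ε) * ∑ i ∈ s, ψf i y := by rw [← Finset.sum_mul]; ring
    have hD := hDpos y
    have hSD : Sf y ≤ Df y := by
      have : (0:ℝ) ≤ infDist y KS := infDist_nonneg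
      simp only [hDfdef]; linarith
    rw [hvdef]
    simp only [norm_smul, Real.norm_eq_abs, abs_of_pos (inv_pos.2 hD)]
    calc (Df y)⁻¹ * ‖Nf y‖ ≤ (Df y)⁻¹ * ((4 * M' / ε) * Sf y) :=
          mul_le_mul_of_nonneg_left hNbd (inv_pos.2 hD).le
      _ ≤ (Df y)⁻¹ * ((4 * M' / ε) * Df y) := by
          apply mul_le_mul_of_nonneg_left _ (inv_pos.2 hD).le
          exact mul_le_mul_of_nonneg_left hSD (by positivity)
      _ = 4 * M' / ε := by field_simp
  refine ⟨v, ⟨4 * M' / ε, hvbd⟩, hvlip, ?_⟩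
  -- the key inequality
  intro l hl x hfx
  set y : ℝ × X := (l, x) with hydef
  have hyK : y ∈ KS := ⟨hl, hfx⟩
  obtain ⟨t, ht, s, hS, hN, hz⟩ := hrep y
  have hyt := mem_of_mem_nhds ht
  have hderiv : deriv (fun s => f (s, x)) l ≤ M' - 1 := by
    have hmem : f (l, x) ∈ Ioo (a - δ) (a + δ) ∪ Ioo (b - δ) (b + δ) := by
      rcases hfx with h | h
      · left; rw [h]; exact ⟨by linarith, by linarith⟩
      · right; rw [h]; exact ⟨by linarith, by linarith⟩
    have := hM l hl x hmem
    have h2 := le_abs_self (deriv (fun s => f (s, x)) l)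
    linarith
  have hgN : g y (Nf y) ≤ -M' * Sf y := by
    rw [hN y hyt, hS y hyt, map_sum, Finset.mul_sum]
    apply Finset.sum_le_sum
    intro i _
    rw [map_smul, smul_eq_mul]
    rcases eq_or_lt_of_le (hψnonneg i y) with h0 | h0
    · rw [← h0]; ring_nf; exact le_refl 0
    · have hyV : y ∈ V i := by
        by_contra hc
        exact absurd (hψ0 i y hc) (ne_of_gt h0)
      have hyU : y ∈ U i := hVU i hyV
      have hgw : g y (w i) < -M' := hyU.1
      calc ψf i y * g y (w i) ≤ ψf i y * (-M') :=
            mul_le_mul_of_nonneg_left hgw.le h0.le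
        _ = -M' * ψf i y := by ring
  have hDeqS : Df y = Sf y := by
    simp only [hDfdef, infDist_zero_of_mem hyK, zero_add]
  have hSy := hSpos y hyK
  have hgv : g y (v y) ≤ -M' := by
    rw [hvdef]
    simp only [map_smul, smul_eq_mul]
    rw [hDeqS]
    calc (Sf y)⁻¹ * g y (Nf y) ≤ (Sf y)⁻¹ * (-M' * Sf y) :=
          mul_le_mul_of_nonneg_left hgN (inv_pos.2 hSy).le
      _ = -M' := by field_simp
  rw [hgeq l x]
  have : g (l, x) (v (l, x)) ≤ -M' := hgv
  linarith
end

section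
/- Let X be a real Banach space and v : ℝ × X → X a bounded, locally Lipschitz vector field, generating the global flow φ : ℝ × ℝ × X → X with ∂φ/∂t(t, λ, x) = v(t + λ, φ(t, λ, x)) and φ(0, λ, x) = x. Let f : ℝ × X → ℝ be C¹ and a ∈ ℝ. Suppose that for all (λ, x) with λ + t ∈ [−1,1] and f(λ + t, φ(t, λ, x)) = a, one has ∂f/∂λ(λ+t, φ(t,λ,x)) + f'_{λ+t}(φ(t,λ,x))[v(λ+t, φ(t,λ,x))] < 0. Then for every λ ∈ [−1,1] and t ≥ 0 with λ + t ∈ [−1,1]: if f(λ, x) ≤ a, then f(λ + t, φ(t, λ, x)) ≤ a. That is, φ(t, λ, ·) maps the sublevel set {f_λ ≤ a} into {f_{λ+t} ≤ a}. -/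
open Set

private lemma fderiv_split {X : Type*} [NormedAddCommGroup X] [NormedSpace ℝ X]
    (f : ℝ × X → ℝ) (hf : ContDiff ℝ 1 f) (p : ℝ × X) (w : X) :
    fderiv ℝ f p (1, w)
      = deriv (fun u => f (u, p.2)) p.1 + fderiv ℝ (fun y => f (p.1, y)) p.2 w := by
  have hD : HasFDerivAt f (fderiv ℝ f p) p :=
    ((hf.differentiable one_ne_zero) p).hasFDerivAt
  have h1 : HasDerivAt (fun u => f (u, p.2)) (fderiv ℝ f p (1, 0)) p.1 := by
    have hc : HasDerivAt (fun u : ℝ => (u, p.2)) ((1 : ℝ), (0 : X)) p.1 :=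
      (hasDerivAt_id p.1).prodMk (hasDerivAt_const p.1 p.2)
    have := hD.comp_hasDerivAt p.1 (by simpa using hc)
    simpa [Function.comp_def] using this
  have h2 : HasFDerivAt (fun y => f (p.1, y))
      ((fderiv ℝ f p).comp (ContinuousLinearMap.inr ℝ ℝ X)) p.2 := by
    have hc : HasFDerivAt (fun y : X => (p.1, y)) (ContinuousLinearMap.inr ℝ ℝ X) p.2 :=
      (hasFDerivAt_const p.1 p.2).prodMk (hasFDerivAt_id p.2)
    exact hD.comp p.2 (by simpa using hc)
  rw [h1.deriv, h2.fderiv]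
  have : ((1 : ℝ), w) = ((1 : ℝ), (0 : X)) + ((0 : ℝ), w) := by simp
  rw [this, map_add]
  simp

theorem stmt6
    {X : Type*} [NormedAddCommGroup X] [NormedSpace ℝ X] [CompleteSpace X]
    (v : ℝ × X → X)
    (hvb : ∃ M : ℝ, ∀ p : ℝ × X, ‖v p‖ ≤ M)
    (hvl : LocallyLipschitz v)
    (φ : ℝ → ℝ → X → X)
    (hφ0 : ∀ l x, φ 0 l x = x)
    (hφ' : ∀ t l x, HasDerivAt (fun s => φ s l x) (v (t + l, φ t l x)) t)
    (f : ℝ × X → ℝ) (hf : ContDiff ℝ 1 f) (a : ℝ)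
    (hsign : ∀ l x t, l + t ∈ Icc (-1:ℝ) 1 → f (l + t, φ t l x) = a →
      deriv (fun s => f (s, φ t l x)) (l + t)
        + fderiv ℝ (fun y => f (l + t, y)) (φ t l x) (v (l + t, φ t l x)) < 0) :
    ∀ l ∈ Icc (-1:ℝ) 1, ∀ t : ℝ, 0 ≤ t → l + t ∈ Icc (-1:ℝ) 1 →
      ∀ x : X, f (l, x) ≤ a → f (l + t, φ t l x) ≤ a := by
  intro l hl t ht hlt x hfa
  set g : ℝ → ℝ := fun s => f (l + s, φ s l x) with hgdef
  -- derivative of g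
  have hg : ∀ s : ℝ, HasDerivAt g
      (deriv (fun u => f (u, φ s l x)) (l + s)
        + fderiv ℝ (fun y => f (l + s, y)) (φ s l x) (v (l + s, φ s l x))) s := by
    intro s
    have hγ : HasDerivAt (fun u : ℝ => (l + u, φ u l x))
        ((1 : ℝ), v (l + s, φ s l x)) s := by
      have h1 : HasDerivAt (fun u : ℝ => l + u) 1 s := by
        simpa using (hasDerivAt_id s).const_add l
      have h2 : HasDerivAt (fun u => φ u l x) (v (l + s, φ s l x)) s := by
        simpa [add_comm] using hφ' s l x
      exact h1.prodMk h2
    have hD : HasFDerivAt f (fderiv ℝ f (l + s, φ s l x)) (l + s, φ s l x) :=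
      ((hf.differentiable one_ne_zero) _).hasFDerivAt
    have := hD.comp_hasDerivAt s hγ
    have hkey := fderiv_split f hf (l + s, φ s l x) (v (l + s, φ s l x))
    simpa [hgdef, hkey, Function.comp_def] using this
  have gcont : Continuous g :=
    continuous_iff_continuousAt.mpr fun s => (hg s).continuousAt
  by_contra hgt
  push_neg at hgt
  have hgt' : a < g t := hgt
  set S : Set ℝ := Icc 0 t ∩ {s | g s ≤ a} with hSdef
  have h0S : (0 : ℝ) ∈ S := by
    refine ⟨⟨le_refl 0, ht⟩, ?_⟩
    simpa [hgdef, hφ0] using hfa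
  have hbdd : BddAbove S := ⟨t, fun s hs => hs.1.2⟩
  have hSc : IsClosed S := isClosed_Icc.inter (isClosed_le gcont continuous_const)
  set t₁ := sSup S with ht₁def
  have ht₁ : t₁ ∈ S := hSc.csSup_mem ⟨0, h0S⟩ hbdd
  have ht₁t : t₁ < t :=
    lt_of_le_of_ne ht₁.1.2 (fun h => absurd ht₁.2 (by rw [h]; exact not_le.2 hgt'))
  have hgtS : ∀ s, t₁ < s → s ≤ t → a < g s := by
    intro s hs hst
    by_contra h
    push_neg at h
    exact absurd (le_csSup hbdd ⟨⟨le_trans ht₁.1.1 hs.le, hst⟩, h⟩) (not_le.2 hs)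
  have hga : g t₁ = a := by
    refine le_antisymm ht₁.2 ?_
    have htend : Filter.Tendsto g (nhdsWithin t₁ (Ioi t₁)) (nhds (g t₁)) :=
      (gcont.continuousAt).mono_left nhdsWithin_le_nhds
    refine ge_of_tendsto htend ?_
    filter_upwards [Ioc_mem_nhdsGT_of_mem ⟨le_refl t₁, ht₁t⟩] with s hs
    exact (hgtS s hs.1 hs.2).le
  have hmem : l + t₁ ∈ Icc (-1 : ℝ) 1 := by
    constructor
    · linarith [hl.1, ht₁.1.1]
    · linarith [hlt.2, ht₁.1.2]
  have hs0 : deriv (fun s => f (s, φ t₁ l x)) (l + t₁)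
      + fderiv ℝ (fun y => f (l + t₁, y)) (φ t₁ l x) (v (l + t₁, φ t₁ l x)) < 0 :=
    hsign l x t₁ hmem hga
  -- slope argument
  have hslope := (hasDerivAt_iff_tendsto_slope.1 (hg t₁))
  have hev : ∀ᶠ s in nhdsWithin t₁ {t₁}ᶜ, slope g t₁ s < 0 :=
    hslope.eventually (eventually_lt_nhds hs0)
  have hev' : ∀ᶠ s in nhdsWithin t₁ (Ioi t₁), slope g t₁ s < 0 :=
    hev.filter_mono (nhdsWithin_mono t₁ (fun s hs => ne_of_gt hs))
  have hev2 : ∀ᶠ s in nhdsWithin t₁ (Ioi t₁), s ∈ Ioc t₁ t :=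
    Ioc_mem_nhdsGT_of_mem ⟨le_refl t₁, ht₁t⟩
  obtain ⟨s, hs1, hs2⟩ := (hev'.and hev2).exists
  have hpos : (0 : ℝ) < s - t₁ := sub_pos.2 hs2.1
  have : g s - g t₁ < 0 := by
    have := hs1
    rw [slope_def_field] at this
    have := div_neg_iff.1 this
    rcases this with ⟨h1, h2⟩ | ⟨h1, h2⟩
    · linarith
    · linarith
  have : g s < a := by rw [hga] at this; linarith
  exact absurd this (not_lt.2 (hgtS s hs2.1 hs2.2).le)
end

section
/- Let H be a separable real Hilbert space with symmetry 𝒥, and f : ℝ × H → ℝ a C¹ map with ∇f(t, x) = 𝒥(x) − K(t, x), where K : ℝ × H → H is continuous with range contained in a compact set. Let (Hₙ) be an increasing sequence of finite-dimensional 𝒥-invariant subspaces with orthogonal projections Pₙ converging to the identity pointwise (hence uniformly on compact sets), and let fₙ be the restriction of f to ℝ × Hₙ. Suppose (zₙ) ⊂ ℝ² is a convergent sequence with zₙ ∈ S_{fₙ}, where S_g = {(t, y) ∈ ℝ² : ∃ x, g(t, x) = y and ∇g_t(x) = 0}. Then z = lim zₙ belongs to S_f. -/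
open Filter Topology Set

theorem stmt10
    {H : Type*} [NormedAddCommGroup H] [InnerProductSpace ℝ H] [CompleteSpace H]
    [TopologicalSpace.SeparableSpace H]
    (Hp Hm : Submodule ℝ H) (hHm : Hm = Hpᗮ)
    (J : H →L[ℝ] H)
    (hJp : ∀ x ∈ Hp, J x = x) (hJm : ∀ x ∈ Hm, J x = -x)
    (f : ℝ × H → ℝ) (hf : ContDiff ℝ 1 f)
    (K : ℝ × H → H) (hK : Continuous K)
    (hKcomp : ∃ C : Set H, IsCompact C ∧ range K ⊆ C)
    (hgrad : ∀ (l : ℝ) (x : H),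
      HasGradientAt (fun y => f (l, y)) (J x - K (l, x)) x)
    (Hn : ℕ → Submodule ℝ H) (hfd : ∀ n, FiniteDimensional ℝ (Hn n))
    (hmono : Monotone Hn)
    (hJinv : ∀ n, ∀ x ∈ Hn n, J x ∈ Hn n)
    (P : ℕ → H →L[ℝ] H)
    (hP : ∀ n, ∀ x : H, P n x ∈ Hn n ∧ x - P n x ∈ (Hn n)ᗮ)
    (hPid : ∀ x : H, Tendsto (fun n => P n x) atTop (𝓝 x))
    (z : ℕ → ℝ × ℝ) (zlim : ℝ × ℝ)
    (hz : ∀ n, ∃ x ∈ Hn n, f ((z n).1, x) = (z n).2 ∧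
      J x - P n (K ((z n).1, x)) = 0)
    (hzlim : Tendsto z atTop (𝓝 zlim)) :
    ∃ x : H, f (zlim.1, x) = zlim.2 ∧ J x - K (zlim.1, x) = 0 := by
  -- J is an involution
  have hJJ : ∀ x : H, J (J x) = x := by
    have hd : Dense ((Hp ⊔ Hpᗮ : Submodule ℝ H) : Set H) := by
      rw [Submodule.dense_iff_topologicalClosure_eq_top,
        ← Submodule.orthogonal_eq_bot_iff]
      have hle : (Hp ⊔ Hpᗮ).topologicalClosureᗮ ≤ Hpᗮ ⊓ Hpᗮᗮ :=
        le_inf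
          (Submodule.orthogonal_le (le_sup_left.trans (Submodule.le_topologicalClosure _)))
          (Submodule.orthogonal_le (le_sup_right.trans (Submodule.le_topologicalClosure _)))
      rw [(Submodule.orthogonal_disjoint Hpᗮ).eq_bot] at hle
      exact le_bot_iff.1 hle
    have heq : Set.EqOn (fun x => J (J x)) (fun x : H => x)
        ((Hp ⊔ Hpᗮ : Submodule ℝ H) : Set H) := by
      intro x hx
      obtain ⟨p, hp, q, hq, rfl⟩ := Submodule.mem_sup.1 hx
      have hq' : q ∈ Hm := hHm ▸ hq
      simp only [map_add, hJp p hp, hJm q hq', map_neg, hJp p hp, hJm q hq']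
      abel
    have := heq.closure (J.continuous.comp J.continuous) continuous_id
    intro x
    exact this (by rw [hd.closure_eq]; trivial)
  -- projections are contractions
  have hPnorm : ∀ n (y : H), ‖P n y‖ ≤ ‖y‖ := by
    intro n y
    obtain ⟨h1, h2⟩ := hP n y
    have hi : inner ℝ (P n y) (y - P n y) = (0 : ℝ) :=
      (Submodule.mem_orthogonal _ _).1 h2 _ h1
    have hsq : ‖y‖ ^ 2 = ‖P n y‖ ^ 2 + ‖y - P n y‖ ^ 2 := by
      have := norm_add_sq_real (P n y) (y - P n y)
      simp only [add_sub_cancel, hi] at this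
      linarith
    nlinarith [norm_nonneg (P n y), norm_nonneg y, sq_nonneg ‖y - P n y‖]
  choose x hxmem hxf hxJ using hz
  obtain ⟨C, hC, hKC⟩ := hKcomp
  set k : ℕ → H := fun n => K ((z n).1, x n) with hk
  have hkC : ∀ n, k n ∈ C := fun n => hKC (mem_range_self _)
  obtain ⟨c, hcC, φ, hφ, hkc⟩ := hC.tendsto_subseq hkC
  -- x n = J (P n (k n))
  have hxeq : ∀ n, x n = J (P n (k n)) := by
    intro n
    have : J (x n) = P n (k n) := by
      have := hxJ n; rw [sub_eq_zero] at this; exact this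
    rw [← this, hJJ]
  -- P (φ j) (k (φ j)) → c
  have hPk : Tendsto (fun j => P (φ j) (k (φ j))) atTop (𝓝 c) := by
    rw [tendsto_iff_norm_sub_tendsto_zero]
    have hb : ∀ j, ‖P (φ j) (k (φ j)) - c‖ ≤ ‖k (φ j) - c‖ + ‖P (φ j) c - c‖ := by
      intro j
      have : P (φ j) (k (φ j)) - c = P (φ j) (k (φ j) - c) + (P (φ j) c - c) := by
        rw [map_sub]; abel
      rw [this]
      exact (norm_add_le _ _).trans (by gcongr; exact hPnorm _ _)
    have h1 : Tendsto (fun j => ‖k (φ j) - c‖) atTop (𝓝 0) := by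
      rw [← tendsto_iff_norm_sub_tendsto_zero]; exact hkc
    have h2 : Tendsto (fun j => ‖P (φ j) c - c‖) atTop (𝓝 0) := by
      rw [← tendsto_iff_norm_sub_tendsto_zero]
      exact (hPid c).comp hφ.tendsto_atTop
    have := h1.add h2
    rw [add_zero] at this
    exact squeeze_zero (fun j => norm_nonneg _) hb this
  -- x (φ j) → J c
  have hxlim : Tendsto (fun j => x (φ j)) atTop (𝓝 (J c)) := by
    simp only [hxeq]
    exact J.continuous.continuousAt.tendsto.comp hPk
  have hzφ : Tendsto (fun j => z (φ j)) atTop (𝓝 zlim) :=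
    hzlim.comp hφ.tendsto_atTop
  have ht : Tendsto (fun j => (z (φ j)).1) atTop (𝓝 zlim.1) :=
    (continuous_fst.tendsto _).comp hzφ
  -- k (φ j) → K (zlim.1, J c), hence c = K (zlim.1, J c)
  have hKlim : Tendsto (fun j => k (φ j)) atTop (𝓝 (K (zlim.1, J c))) :=
    (hK.tendsto _).comp (ht.prodMk_nhds hxlim)
  have hc : c = K (zlim.1, J c) := tendsto_nhds_unique hkc hKlim
  refine ⟨J c, ?_, ?_⟩
  · have hflim : Tendsto (fun j => f ((z (φ j)).1, x (φ j))) atTop (𝓝 (f (zlim.1, J c))) :=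
      (hf.continuous.tendsto _).comp (ht.prodMk_nhds hxlim)
    have hflim' : Tendsto (fun j => f ((z (φ j)).1, x (φ j))) atTop (𝓝 zlim.2) := by
      simp only [hxf]
      exact (continuous_snd.tendsto _).comp hzφ
    exact tendsto_nhds_unique hflim hflim'
  · rw [sub_eq_zero, hJJ]; exact hc
end

section
/- Let H be a separable real Hilbert space, T : H → H a self-adjoint Fredholm operator, and Kₐ, K_b : H → H compact self-adjoint operators such that Lₐ = T + Kₐ and L_b = T + K_b. Then both dim(V⁻(Lₐ) ∩ V⁺(L_b)) and dim(V⁻(L_b) ∩ V⁺(Lₐ)) are finite, where V⁻(L), V⁺(L) denote the negative and positive eigenspaces of a self-adjoint Fredholm operator L. -/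
open scoped RealInnerProductSpace

open Filter Topology

section SpectralFlowAux

set_option maxHeartbeats 1000000
set_option linter.unusedSectionVars false
set_option linter.unnecessarySimpa false

variable {H : Type*} [NormedAddCommGroup H] [InnerProductSpace ℝ H] [CompleteSpace H]

lemma finiteDimensional_of_compact_bddBelow (K : H →L[ℝ] H) (hK : IsCompactOperator K)
    (W : Submodule ℝ H) (hWc : IsClosed (W : Set H)) {c : ℝ} (hc : 0 < c)
    (hb : ∀ x ∈ W, c * ‖x‖ ≤ ‖K x‖) : FiniteDimensional ℝ W := by
  haveI : CompleteSpace W := hWc.completeSpace_coe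
  refine FiniteDimensional.of_isCompact_closedBall₀ (𝕜 := ℝ) (r := 1) one_pos ?_
  have hC : IsCompact (closure ((K : H →ₗ[ℝ] H) '' Metric.closedBall 0 1)) :=
    hK.isCompact_closure_image_of_bounded Metric.isBounded_closedBall
  refine IsSeqCompact.isCompact ?_
  intro u hu
  have hun : ∀ n, ‖(u n : H)‖ ≤ 1 := by
    intro n
    have := hu n
    rw [Metric.mem_closedBall, dist_zero_right] at this
    exact this
  have hmem : ∀ n, K (u n : H) ∈ closure ((K : H →ₗ[ℝ] H) '' Metric.closedBall 0 1) := by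
    intro n
    exact subset_closure (Set.mem_image_of_mem _ (by
      rw [Metric.mem_closedBall, dist_zero_right]; exact hun n))
  obtain ⟨z, _, φ, hφ, hconv⟩ := hC.tendsto_subseq hmem
  have hcauchy : CauchySeq fun n => u (φ n) := by
    rw [Metric.cauchySeq_iff]
    intro ε hε
    have hc2 : CauchySeq fun n => K (u (φ n) : H) := hconv.cauchySeq
    rw [Metric.cauchySeq_iff] at hc2
    obtain ⟨N, hN⟩ := hc2 (c * ε) (by positivity)
    refine ⟨N, fun m hm n hn => ?_⟩
    have h1 := hN m hm n hn
    have h2 : c * ‖(u (φ m) : H) - (u (φ n) : H)‖ ≤ ‖K ((u (φ m) : H) - (u (φ n) : H))‖ :=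
      hb _ (Submodule.sub_mem _ (u (φ m)).2 (u (φ n)).2)
    rw [map_sub] at h2
    rw [Subtype.dist_eq, dist_eq_norm]
    rw [dist_eq_norm] at h1
    nlinarith [norm_nonneg ((u (φ m) : H) - (u (φ n) : H))]
  obtain ⟨x, hx⟩ := cauchySeq_tendsto_of_complete hcauchy
  refine ⟨x, ?_, φ, hφ, hx⟩
  exact Metric.isClosed_closedBall.mem_of_tendsto hx (Filter.Eventually.of_forall fun n => hu (φ n))

lemma form_bound (S : H →L[ℝ] H) (hS : ∀ x y : H, ⟪S x, y⟫ = ⟪x, S y⟫)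
    (V : Submodule ℝ H) (hinv : ∀ x ∈ V, S x ∈ V) (hneg : ∀ x ∈ V, ⟪S x, x⟫ ≤ 0)
    {m : ℝ} (hm : 0 < m) (hb : ∀ x ∈ V, m * ‖x‖ ≤ ‖S x‖) :
    ∀ x ∈ V, ⟪S x, x⟫ ≤ -(m ^ 2 / (‖S‖ + 1)) * ‖x‖ ^ 2 := by
  have hSpos : (0:ℝ) < ‖S‖ + 1 := by positivity
  intro x hx
  by_cases hx0 : x = 0
  · simp [hx0]
  have hxn : 0 < ‖x‖ := norm_pos_iff.mpr hx0
  set y := S x with hy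
  have hyV : y ∈ V := hinv x hx
  -- Cauchy–Schwarz for the nonneg form -⟪S·,·⟫ on V
  have hquad : ∀ t : ℝ, 0 ≤ (-⟪S y, y⟫) * (t * t) + (-(2 * ⟪S x, y⟫)) * t + (-⟪S x, x⟫) := by
    intro t
    have hmem : x + t • y ∈ V := V.add_mem hx (V.smul_mem _ hyV)
    have h0 : ⟪S (x + t • y), x + t • y⟫ ≤ 0 := hneg _ hmem
    have hsymm : ⟪S y, x⟫ = ⟪S x, y⟫ := by
      rw [hS y x, real_inner_comm]
    have hexp : ⟪S (x + t • y), x + t • y⟫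
        = ⟪S x, x⟫ + 2 * t * ⟪S x, y⟫ + (t * t) * ⟪S y, y⟫ := by
      rw [map_add, map_smul]
      simp only [inner_add_left, inner_add_right, real_inner_smul_left, real_inner_smul_right,
        hsymm]
      ring
    rw [hexp] at h0
    nlinarith [h0]
  have hdisc := discrim_le_zero hquad
  rw [discrim] at hdisc
  have key : ⟪S x, y⟫ ^ 2 ≤ ⟪S x, x⟫ * ⟪S y, y⟫ := by nlinarith [hdisc]
  have hSy2 : ⟪S x, y⟫ = ‖y‖ ^ 2 := by
    rw [hy, real_inner_self_eq_norm_sq]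
  have hyn : 0 < ‖y‖ := lt_of_lt_of_le (by positivity) (hb x hx)
  -- bound ⟪S y, y⟫ from below
  have hbound : -⟪S y, y⟫ ≤ (‖S‖ + 1) * ‖y‖ ^ 2 := by
    have h1 : |⟪S y, y⟫| ≤ ‖S y‖ * ‖y‖ := abs_real_inner_le_norm _ _
    have h2 : ‖S y‖ ≤ ‖S‖ * ‖y‖ := S.le_opNorm y
    nlinarith [abs_nonneg ⟪S y, y⟫, neg_abs_le ⟪S y, y⟫, norm_nonneg y]
  -- combine
  have h3 : ‖y‖ ^ 2 * ‖y‖ ^ 2 ≤ (-⟪S x, x⟫) * ((‖S‖ + 1) * ‖y‖ ^ 2) := by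
    have hxx : 0 ≤ -⟪S x, x⟫ := by linarith [hneg x hx]
    nlinarith [key, hSy2, mul_le_mul_of_nonneg_left hbound hxx]
  have h4 : ‖y‖ ^ 2 ≤ (-⟪S x, x⟫) * (‖S‖ + 1) := by
    have := le_of_mul_le_mul_right (by nlinarith [h3] :
      ‖y‖ ^ 2 * ‖y‖ ^ 2 ≤ ((-⟪S x, x⟫) * (‖S‖ + 1)) * ‖y‖ ^ 2) (by positivity : (0:ℝ) < ‖y‖ ^ 2)
    exact this
  have h5 : m ^ 2 * ‖x‖ ^ 2 ≤ ‖y‖ ^ 2 := by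
    have hbx := hb x hx
    nlinarith [mul_le_mul hbx hbx (by positivity : (0:ℝ) ≤ m * ‖x‖) (norm_nonneg y)]
  rw [neg_mul, le_neg, div_mul_eq_mul_div, div_le_iff₀ hSpos]
  nlinarith [h4, h5]

lemma norm_bound (T K S : H →L[ℝ] H) (hS : S = T + K)
    (hTker : FiniteDimensional ℝ (LinearMap.ker (T : H →ₗ[ℝ] H)))
    (hTrange : IsClosed (LinearMap.range (T : H →ₗ[ℝ] H) : Set H))
    (hKc : IsCompactOperator K)
    (V : Submodule ℝ H) (hVc : IsClosed (V : Set H))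
    (hinj : ∀ x ∈ V, S x = 0 → x = 0) :
    ∃ m : ℝ, 0 < m ∧ ∀ x ∈ V, m * ‖x‖ ≤ ‖S x‖ := by
  by_contra hcon
  push_neg at hcon
  -- construct a unit norm sequence in V with S (u n) → 0
  have hseq : ∀ n : ℕ, ∃ x : H, x ∈ V ∧ ‖x‖ = 1 ∧ ‖S x‖ < 1 / (n + 1) := by
    intro n
    obtain ⟨x, hxV, hxlt⟩ := hcon (1 / (n + 1)) (by positivity)
    have hx0 : x ≠ 0 := by
      rintro rfl
      simp at hxlt
    have hxn : 0 < ‖x‖ := norm_pos_iff.mpr hx0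
    refine ⟨‖x‖⁻¹ • x, V.smul_mem _ hxV, ?_, ?_⟩
    · rw [norm_smul, norm_inv, norm_norm, inv_mul_cancel₀ hxn.ne']
    · rw [map_smul, norm_smul, norm_inv, norm_norm]
      have h2 : ‖x‖⁻¹ * ‖S x‖ < ‖x‖⁻¹ * (1 / (n + 1) * ‖x‖) :=
        mul_lt_mul_of_pos_left hxlt (inv_pos.mpr hxn)
      have h3 : ‖x‖⁻¹ * (1 / ((n:ℝ) + 1) * ‖x‖) = 1 / (n + 1) := by
        field_simp
      linarith
  choose u huV hun hus using hseq
  have hS0 : Tendsto (fun n => S (u n)) atTop (𝓝 0) := by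
    refine squeeze_zero_norm (fun n => (hus n).le) ?_
    exact tendsto_one_div_add_atTop_nhds_zero_nat
  -- compactness of K : extract subsequence with K (u n) convergent
  have hC : IsCompact (closure ((K : H →ₗ[ℝ] H) '' Metric.closedBall 0 1)) :=
    hKc.isCompact_closure_image_of_bounded Metric.isBounded_closedBall
  have hmem : ∀ n, K (u n) ∈ closure ((K : H →ₗ[ℝ] H) '' Metric.closedBall 0 1) := fun n =>
    subset_closure (Set.mem_image_of_mem _ (by
      rw [Metric.mem_closedBall, dist_zero_right, hun n]))
  obtain ⟨z, _, φ, hφ, hKconv⟩ := hC.tendsto_subseq hmem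
  -- T (u (φ n)) → -z
  have hTconv : Tendsto (fun n => T (u (φ n))) atTop (𝓝 (-z)) := by
    have heq : (fun n => T (u (φ n))) = fun n => S (u (φ n)) - K (u (φ n)) := by
      funext n; rw [hS]; simp
    rw [heq]
    have h1 : Tendsto (fun n => S (u (φ n))) atTop (𝓝 0) := hS0.comp hφ.tendsto_atTop
    simpa using h1.sub hKconv
  -- finite dimensional kernel: extract subsequence with convergent projection
  set N := LinearMap.ker (T : H →ₗ[ℝ] H) with hN
  haveI : CompleteSpace N := FiniteDimensional.complete ℝ N
  set P := N.orthogonalProjectionOnto with hP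
  have hPle : ∀ n, ‖P (u (φ n))‖ ≤ 1 := by
    intro n
    calc ‖P (u (φ n))‖ ≤ ‖(P : H →L[ℝ] N)‖ * ‖u (φ n)‖ := (P : H →L[ℝ] N).le_opNorm _
    _ ≤ 1 * 1 := by
        apply mul_le_mul (N.orthogonalProjectionOnto_norm_le) (le_of_eq (hun _)) (norm_nonneg _)
          zero_le_one
    _ = 1 := one_mul 1
  have hballN : IsCompact (Metric.closedBall (0 : N) 1) := isCompact_closedBall _ _
  have hmemN : ∀ n, P (u (φ n)) ∈ Metric.closedBall (0 : N) 1 := fun n => by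
    rw [Metric.mem_closedBall, dist_zero_right]; exact hPle n
  obtain ⟨p, _, ψ, hψ, hpconv⟩ := hballN.tendsto_subseq hmemN
  -- the operator T is bounded below on Nᗮ
  haveI : CompleteSpace (LinearMap.range (T : H →ₗ[ℝ] H)) := hTrange.completeSpace_coe
  haveI : CompleteSpace Nᗮ := (Submodule.isClosed_orthogonal N).completeSpace_coe
  set g : Nᗮ →L[ℝ] (LinearMap.range (T : H →ₗ[ℝ] H)) :=
    (T.comp (Submodule.subtypeL Nᗮ)).codRestrict (LinearMap.range (T : H →ₗ[ℝ] H))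
      (fun x => LinearMap.mem_range_self _ _) with hg
  have hgapp : ∀ x : Nᗮ, ((g x : H)) = T x := fun x => rfl
  have hgker : LinearMap.ker (g : Nᗮ →ₗ[ℝ] (LinearMap.range (T : H →ₗ[ℝ] H))) = ⊥ := by
    rw [LinearMap.ker_eq_bot']
    intro x hx
    have hTx : T (x : H) = 0 := by
      have := congrArg (Subtype.val) hx
      simpa [hgapp] using this
    have hxN : (x : H) ∈ N := hTx
    have : ⟪(x : H), (x : H)⟫ = 0 := x.2 _ hxN
    ext
    simpa using inner_self_eq_zero.mp this
  have hgrange : LinearMap.range (g : Nᗮ →ₗ[ℝ] (LinearMap.range (T : H →ₗ[ℝ] H))) = ⊤ := by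
    rw [LinearMap.range_eq_top]
    rintro ⟨y, w, rfl⟩
    refine ⟨⟨w - P w, N.sub_starProjection_mem_orthogonal w⟩, ?_⟩
    ext
    have hPw : T ((P w : H)) = 0 := (P w).2
    simp [hgapp, map_sub, hPw]
  set E := ContinuousLinearEquiv.ofBijective g hgker hgrange with hE
  obtain ⟨cg, hcg⟩ : ∃ cg : NNReal, AntilipschitzWith cg g := by
    have h := E.antilipschitz
    rw [hE, ContinuousLinearEquiv.coeFn_ofBijective] at h
    exact ⟨_, h⟩
  -- the component of u in Nᗮ
  set v : ℕ → Nᗮ := fun n => ⟨u n - P (u n), N.sub_starProjection_mem_orthogonal (u n)⟩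
    with hv
  have hgv : ∀ n, ((g (v n) : H)) = T (u n) := by
    intro n
    have hPu : T ((P (u n) : H)) = 0 := (P (u n)).2
    simp [hgapp, hv, map_sub, hPu]
  have hvcauchy : CauchySeq fun n => v (φ (ψ n)) := by
    rw [Metric.cauchySeq_iff]
    intro ε hε
    have hTc : CauchySeq fun n => T (u (φ (ψ n))) :=
      (hTconv.comp hψ.tendsto_atTop).cauchySeq
    rw [Metric.cauchySeq_iff] at hTc
    have hcg1 : (0:ℝ) < (cg:ℝ) + 1 := by positivity
    obtain ⟨M, hM⟩ := hTc (ε / ((cg:ℝ) + 1)) (by positivity)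
    refine ⟨M, fun i hi j hj => ?_⟩
    have h1 := hM i hi j hj
    have h2 : dist (v (φ (ψ i))) (v (φ (ψ j))) ≤
        (cg:ℝ) * dist (g (v (φ (ψ i)))) (g (v (φ (ψ j)))) := hcg.le_mul_dist _ _
    have h3 : dist (g (v (φ (ψ i)))) (g (v (φ (ψ j)))) =
        dist (T (u (φ (ψ i)))) (T (u (φ (ψ j)))) := by
      rw [Subtype.dist_eq, hgv, hgv]
    rw [h3] at h2
    have hcgn : (0:ℝ) ≤ (cg:ℝ) := cg.2
    calc dist (v (φ (ψ i))) (v (φ (ψ j))) ≤ (cg:ℝ) * dist (T (u (φ (ψ i)))) (T (u (φ (ψ j)))) :=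
        h2
    _ ≤ (cg:ℝ) * (ε / ((cg:ℝ) + 1)) := by
        apply mul_le_mul_of_nonneg_left h1.le hcgn
    _ < ε := by
        rw [mul_div_assoc']
        rw [div_lt_iff₀ hcg1]
        nlinarith
  obtain ⟨q, hq⟩ := cauchySeq_tendsto_of_complete hvcauchy
  -- the full subsequence converges to (p : H) + (q : H)
  have huconv : Tendsto (fun n => u (φ (ψ n))) atTop (𝓝 ((p : H) + (q : H))) := by
    have hsum : Tendsto (fun n => ((P (u (φ (ψ n))) : H) + (v (φ (ψ n)) : H))) atTop
        (𝓝 ((p : H) + (q : H))) :=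
      ((continuous_subtype_val.tendsto p).comp hpconv).add
        ((continuous_subtype_val.tendsto q).comp hq)
    refine hsum.congr fun n => ?_
    simp [hv]
  have hxV : (p : H) + (q : H) ∈ V :=
    hVc.mem_of_tendsto huconv (Eventually.of_forall fun n => huV _)
  have hxnorm : ‖(p : H) + (q : H)‖ = 1 := by
    have h1 : Tendsto (fun n => ‖u (φ (ψ n))‖) atTop (𝓝 ‖(p : H) + (q : H)‖) := huconv.norm
    have h2 : Tendsto (fun n => ‖u (φ (ψ n))‖) atTop (𝓝 1) := by
      simpa [hun] using (tendsto_const_nhds : Tendsto (fun _ : ℕ => (1:ℝ)) atTop (𝓝 1))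
    exact tendsto_nhds_unique h1 h2
  have hSx : S ((p : H) + (q : H)) = 0 := by
    have h1 : Tendsto (fun n => S (u (φ (ψ n)))) atTop (𝓝 (S ((p : H) + (q : H)))) :=
      (S.continuous.tendsto _).comp huconv
    have h2 : Tendsto (fun n => S (u (φ (ψ n)))) atTop (𝓝 0) :=
      hS0.comp ((hφ.comp hψ).tendsto_atTop)
    exact tendsto_nhds_unique h1 h2
  have := hinj _ hxV hSx
  rw [this, norm_zero] at hxnorm
  exact one_ne_zero hxnorm.symm

lemma key_findim (T K1 K2 L1 L2 : H →L[ℝ] H)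
    (hL1 : L1 = T + K1) (hL2 : L2 = T + K2)
    (hL1s : ∀ x y : H, ⟪L1 x, y⟫ = ⟪x, L1 y⟫) (hL2s : ∀ x y : H, ⟪L2 x, y⟫ = ⟪x, L2 y⟫)
    (hTker : FiniteDimensional ℝ (LinearMap.ker (T : H →ₗ[ℝ] H)))
    (hTrange : IsClosed (LinearMap.range (T : H →ₗ[ℝ] H) : Set H))
    (hK1c : IsCompactOperator K1) (hK2c : IsCompactOperator K2)
    (Vm Vp : Submodule ℝ H) (hVmc : IsClosed (Vm : Set H)) (hVpc : IsClosed (Vp : Set H))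
    (hinvm : ∀ x ∈ Vm, L1 x ∈ Vm) (hnegm : ∀ x ∈ Vm, x ≠ 0 → ⟪L1 x, x⟫ < 0)
    (hkerm : ∀ x ∈ Vm, L1 x = 0 → x = 0)
    (hinvp : ∀ x ∈ Vp, L2 x ∈ Vp) (hposp : ∀ x ∈ Vp, x ≠ 0 → 0 < ⟪L2 x, x⟫)
    (hkerp : ∀ x ∈ Vp, L2 x = 0 → x = 0) :
    FiniteDimensional ℝ ↥(Vm ⊓ Vp) := by
  -- L1 is bounded below in norm on Vm, L2 on Vp
  obtain ⟨m1, hm1, hb1⟩ := norm_bound T K1 L1 hL1 hTker hTrange hK1c Vm hVmc hkerm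
  obtain ⟨m2, hm2, hb2⟩ := norm_bound T K2 L2 hL2 hTker hTrange hK2c Vp hVpc hkerp
  -- quadratic form bounds
  have hneg1 : ∀ x ∈ Vm, ⟪L1 x, x⟫ ≤ 0 := by
    intro x hx
    by_cases hx0 : x = 0
    · simp [hx0]
    · exact (hnegm x hx hx0).le
  have hf1 := form_bound L1 hL1s Vm hinvm hneg1 hm1 hb1
  set c1 : ℝ := m1 ^ 2 / (‖L1‖ + 1) with hc1def
  have hc1 : 0 < c1 := by positivity
  -- for L2 apply form_bound to -L2 on Vp
  have hL2s' : ∀ x y : H, ⟪(-L2) x, y⟫ = ⟪x, (-L2) y⟫ := by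
    intro x y
    simp only [ContinuousLinearMap.neg_apply, inner_neg_left, inner_neg_right, hL2s]
  have hinvp' : ∀ x ∈ Vp, (-L2) x ∈ Vp := by
    intro x hx
    simpa using Vp.neg_mem (hinvp x hx)
  have hneg2 : ∀ x ∈ Vp, ⟪(-L2) x, x⟫ ≤ 0 := by
    intro x hx
    by_cases hx0 : x = 0
    · simp [hx0]
    · simp only [ContinuousLinearMap.neg_apply, inner_neg_left]
      linarith [hposp x hx hx0]
  have hb2' : ∀ x ∈ Vp, m2 * ‖x‖ ≤ ‖(-L2) x‖ := by
    intro x hx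
    simpa using hb2 x hx
  have hf2 := form_bound (-L2) hL2s' Vp hinvp' hneg2 hm2 hb2'
  set c2 : ℝ := m2 ^ 2 / (‖-L2‖ + 1) with hc2def
  have hc2 : 0 < c2 := by positivity
  -- the compact operator K2 - K1 is bounded below on Vm ⊓ Vp
  set c : ℝ := c1 + c2 with hcdef
  have hc : 0 < c := by positivity
  have hWclosed : IsClosed ((Vm ⊓ Vp : Submodule ℝ H) : Set H) := by
    rw [Submodule.coe_inf]
    exact hVmc.inter hVpc
  refine finiteDimensional_of_compact_bddBelow (K2 - K1) (hK2c.sub hK1c) _ hWclosed hc ?_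
  intro x hx
  obtain ⟨hxm, hxp⟩ := Submodule.mem_inf.mp hx
  have h1 : ⟪L1 x, x⟫ ≤ -c1 * ‖x‖ ^ 2 := by simpa [hc1def] using hf1 x hxm
  have h2 : ⟪(-L2) x, x⟫ ≤ -c2 * ‖x‖ ^ 2 := by simpa [hc2def] using hf2 x hxp
  have h2' : c2 * ‖x‖ ^ 2 ≤ ⟪L2 x, x⟫ := by
    simp only [ContinuousLinearMap.neg_apply, inner_neg_left] at h2
    linarith
  have hKd : ⟪(K2 - K1) x, x⟫ = ⟪L2 x, x⟫ - ⟪L1 x, x⟫ := by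
    have : K2 - K1 = L2 - L1 := by rw [hL1, hL2]; abel
    rw [this]
    simp only [ContinuousLinearMap.sub_apply, inner_sub_left]
  have hform : c * ‖x‖ ^ 2 ≤ ⟪(K2 - K1) x, x⟫ := by
    rw [hKd, hcdef]
    nlinarith [h1, h2']
  by_cases hx0 : x = 0
  · simp [hx0]
  have hxn : 0 < ‖x‖ := norm_pos_iff.mpr hx0
  have hcs : ⟪(K2 - K1) x, x⟫ ≤ ‖(K2 - K1) x‖ * ‖x‖ := real_inner_le_norm _ _
  have := le_trans hform hcs
  rw [pow_two] at this
  have := le_of_mul_le_mul_right (by linarith [this] :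
    (c * ‖x‖) * ‖x‖ ≤ ‖(K2 - K1) x‖ * ‖x‖) hxn
  exact this

end SpectralFlowAux

set_option maxHeartbeats 1000000 in
theorem stmt12
    {H : Type*} [NormedAddCommGroup H] [InnerProductSpace ℝ H] [CompleteSpace H]
    [TopologicalSpace.SeparableSpace H]
    (T Ka Kb : H →L[ℝ] H)
    (hT : IsSelfAdjoint T)
    (hTker : FiniteDimensional ℝ (LinearMap.ker (T : H →ₗ[ℝ] H)))
    (hTrange : IsClosed (LinearMap.range (T : H →ₗ[ℝ] H) : Set H))
    (hTcoker : FiniteDimensional ℝ (H ⧸ LinearMap.range (T : H →ₗ[ℝ] H)))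
    (hKa : IsSelfAdjoint Ka) (hKb : IsSelfAdjoint Kb)
    (hKac : IsCompactOperator Ka) (hKbc : IsCompactOperator Kb)
    (La Lb : H →L[ℝ] H) (hLa : La = T + Ka) (hLb : Lb = T + Kb)
    (Vam Vap Vbm Vbp : Submodule ℝ H)
    (hVamc : IsClosed (Vam : Set H)) (hVapc : IsClosed (Vap : Set H))
    (hVbmc : IsClosed (Vbm : Set H)) (hVbpc : IsClosed (Vbp : Set H))
    -- orthogonal splitting for La
    (haorth : ∀ x ∈ Vam, ∀ y ∈ Vap, ⟪x, y⟫ = 0)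
    (haorthm : ∀ x ∈ Vam, ∀ y ∈ LinearMap.ker (La : H →ₗ[ℝ] H), ⟪x, y⟫ = 0)
    (haorthp : ∀ x ∈ Vap, ∀ y ∈ LinearMap.ker (La : H →ₗ[ℝ] H), ⟪x, y⟫ = 0)
    (hasup : Vam ⊔ Vap ⊔ LinearMap.ker (La : H →ₗ[ℝ] H) = ⊤)
    (hainvm : ∀ x ∈ Vam, La x ∈ Vam) (hainvp : ∀ x ∈ Vap, La x ∈ Vap)
    (haneg : ∀ x ∈ Vam, x ≠ 0 → ⟪La x, x⟫ < 0)
    (hapos : ∀ x ∈ Vap, x ≠ 0 → 0 < ⟪La x, x⟫)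
    -- orthogonal splitting for Lb
    (hborth : ∀ x ∈ Vbm, ∀ y ∈ Vbp, ⟪x, y⟫ = 0)
    (hborthm : ∀ x ∈ Vbm, ∀ y ∈ LinearMap.ker (Lb : H →ₗ[ℝ] H), ⟪x, y⟫ = 0)
    (hborthp : ∀ x ∈ Vbp, ∀ y ∈ LinearMap.ker (Lb : H →ₗ[ℝ] H), ⟪x, y⟫ = 0)
    (hbsup : Vbm ⊔ Vbp ⊔ LinearMap.ker (Lb : H →ₗ[ℝ] H) = ⊤)
    (hbinvm : ∀ x ∈ Vbm, Lb x ∈ Vbm) (hbinvp : ∀ x ∈ Vbp, Lb x ∈ Vbp)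
    (hbneg : ∀ x ∈ Vbm, x ≠ 0 → ⟪Lb x, x⟫ < 0)
    (hbpos : ∀ x ∈ Vbp, x ≠ 0 → 0 < ⟪Lb x, x⟫) :
    FiniteDimensional ℝ ↥(Vam ⊓ Vbp) ∧ FiniteDimensional ℝ ↥(Vbm ⊓ Vap) := by
  have hLasa : IsSelfAdjoint La := by rw [hLa]; exact hT.add hKa
  have hLbsa : IsSelfAdjoint Lb := by rw [hLb]; exact hT.add hKb
  have hLas : ∀ x y : H, ⟪La x, y⟫ = ⟪x, La y⟫ := fun x y =>
    (ContinuousLinearMap.isSelfAdjoint_iff_isSymmetric.mp hLasa) x y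
  have hLbs : ∀ x y : H, ⟪Lb x, y⟫ = ⟪x, Lb y⟫ := fun x y =>
    (ContinuousLinearMap.isSelfAdjoint_iff_isSymmetric.mp hLbsa) x y
  have hkeram : ∀ x ∈ Vam, La x = 0 → x = 0 := by
    intro x hx hx0
    have hk : x ∈ LinearMap.ker (La : H →ₗ[ℝ] H) := hx0
    have := haorthm x hx x hk
    exact inner_self_eq_zero.mp this
  have hkerap : ∀ x ∈ Vap, La x = 0 → x = 0 := by
    intro x hx hx0
    have hk : x ∈ LinearMap.ker (La : H →ₗ[ℝ] H) := hx0
    have := haorthp x hx x hk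
    exact inner_self_eq_zero.mp this
  have hkerbm : ∀ x ∈ Vbm, Lb x = 0 → x = 0 := by
    intro x hx hx0
    have hk : x ∈ LinearMap.ker (Lb : H →ₗ[ℝ] H) := hx0
    have := hborthm x hx x hk
    exact inner_self_eq_zero.mp this
  have hkerbp : ∀ x ∈ Vbp, Lb x = 0 → x = 0 := by
    intro x hx hx0
    have hk : x ∈ LinearMap.ker (Lb : H →ₗ[ℝ] H) := hx0
    have := hborthp x hx x hk
    exact inner_self_eq_zero.mp this
  constructor
  · exact key_findim T Ka Kb La Lb hLa hLb hLas hLbs hTker hTrange hKac hKbc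
      Vam Vbp hVamc hVbpc hainvm haneg hkeram hbinvp hbpos hkerbp
  · exact key_findim T Kb Ka Lb La hLb hLa hLbs hLas hTker hTrange hKbc hKac
      Vbm Vap hVbmc hVapc hbinvm hbneg hkerbm hainvp hapos hkerap
end
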